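/- Let g be a standard Gaussian random variable and Φ its cumulative distribution function. Then for all z ≥ 0, Φ(−z) ≥ e^{−2z²/3}/4. -/
import Mathlib

open MeasureTheory ProbabilityTheory Real Set Filter

noncomputable def gfun (x : ℝ) : ℝ := exp (-x ^ 2 / 2)

lemma gfun_cont : Continuous gfun := by
  unfold gfun; continuity

lemma gfun_int : Integrable gfun := by
  have := integrable_exp_neg_mul_sq (by norm_num : (0:ℝ) < 1/2)
  convert this using 2 with x
  unfold gfun; ring_nf

noncomputable def Ffun (z : ℝ) : ℝ := ∫ x in Ioi z, gfun x

lemma Ffun_eq (z : ℝ) : Ffun z = Ffun 0 - ∫ x in (0:ℝ)..z, gfun x := by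
  have h1 := intervalIntegral.integral_Iic_add_Ioi (μ := volume) (b := z) gfun_int.integrableOn gfun_int.integrableOn
  have h2 := intervalIntegral.integral_Iic_add_Ioi (μ := volume) (b := (0:ℝ)) gfun_int.integrableOn gfun_int.integrableOn
  have h3 := intervalIntegral.integral_Iic_sub_Iic (μ := volume) (a := (0:ℝ)) (b := z)
    gfun_int.integrableOn gfun_int.integrableOn
  unfold Ffun
  linarith

lemma Ffun_hasDeriv (x : ℝ) : HasDerivAt Ffun (-gfun x) x := by
  have h : HasDerivAt (fun u => ∫ t in (0:ℝ)..u, gfun t) (gfun x) x :=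
    intervalIntegral.integral_hasDerivAt_right (gfun_cont.intervalIntegrable _ _)
      (gfun_cont.stronglyMeasurableAtFilter _ _) gfun_cont.continuousAt
  have : HasDerivAt (fun z => Ffun 0 - ∫ t in (0:ℝ)..z, gfun t) (-gfun x) x := by
    simpa using (h.const_sub (Ffun 0))
  exact this.congr_of_eventuallyEq (Filter.Eventually.of_forall fun y => Ffun_eq y)

noncomputable def hfun (z : ℝ) : ℝ := Ffun z - Real.sqrt (2 * π) / 4 * exp (-(2 * z ^ 2) / 3)

lemma efun_hasDeriv (x : ℝ) :
    HasDerivAt (fun z : ℝ => exp (-(2 * z ^ 2) / 3)) (exp (-(2 * x ^ 2) / 3) * (-(4 * x) / 3)) x := by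
  have h1 : HasDerivAt (fun z : ℝ => -(2 * z ^ 2) / 3) (-(4 * x) / 3) x := by
    have := ((hasDerivAt_pow 2 x).const_mul (2:ℝ)).neg.div_const 3
    simpa using this.congr_deriv (by ring)
  exact h1.exp

lemma hfun_hasDeriv (x : ℝ) :
    HasDerivAt hfun (-gfun x - Real.sqrt (2 * π) / 4 * (exp (-(2 * x ^ 2) / 3) * (-(4 * x) / 3))) x :=
  (Ffun_hasDeriv x).sub ((efun_hasDeriv x).const_mul _)

lemma key_ineq (x : ℝ) (hx : 0 ≤ x) : Real.sqrt (2 * π) * x ≤ 3 * exp (x ^ 2 / 6) := by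
  have e1 : 1 + (x ^ 2 / 6 - 1 / 2) ≤ exp (x ^ 2 / 6 - 1 / 2) := by
    have := Real.add_one_le_exp (x ^ 2 / 6 - 1 / 2); linarith
  have e2 : exp (x ^ 2 / 6 - 1 / 2) * exp (1 / 2) = exp (x ^ 2 / 6) := by
    rw [← Real.exp_add]; ring_nf
  have s3 : Real.sqrt 3 * x ≤ 3 * (x ^ 2 / 6 + 1 / 2) := by
    nlinarith [Real.sq_sqrt (by norm_num : (0:ℝ) ≤ 3), sq_nonneg (x - Real.sqrt 3),
      Real.sqrt_nonneg (3:ℝ)]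
  have s4 : Real.sqrt (2 * π) ≤ Real.sqrt 3 * exp (1 / 2) := by
    rw [Real.exp_half, ← Real.sqrt_mul (by norm_num : (0:ℝ) ≤ 3)]
    apply Real.sqrt_le_sqrt
    nlinarith [Real.pi_lt_d2, Real.exp_one_gt_d9]
  have epos : (0:ℝ) < exp (1 / 2) := Real.exp_pos _
  calc Real.sqrt (2 * π) * x ≤ Real.sqrt 3 * exp (1 / 2) * x := by
        apply mul_le_mul_of_nonneg_right s4 hx
    _ = (Real.sqrt 3 * x) * exp (1 / 2) := by ring
    _ ≤ 3 * (x ^ 2 / 6 + 1 / 2) * exp (1 / 2) := by nlinarith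
    _ = 3 * ((1 + (x ^ 2 / 6 - 1 / 2)) * exp (1 / 2)) := by ring
    _ ≤ 3 * (exp (x ^ 2 / 6 - 1 / 2) * exp (1 / 2)) := by nlinarith
    _ = 3 * exp (x ^ 2 / 6) := by rw [e2]

lemma deriv_nonpos (x : ℝ) (hx : 0 ≤ x) : deriv hfun x ≤ 0 := by
  rw [(hfun_hasDeriv x).deriv]
  have key := key_ineq x hx
  -- need: sqrt(2π)/4 * exp(-2x²/3) * (4x/3) ≤ exp(-x²/2)
  -- i.e. sqrt(2π) * x * exp(-2x²/3) ≤ 3 * exp(-x²/2)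
  -- from sqrt(2π) * x ≤ 3 * exp(x²/6) and exp(x²/6)*exp(-2x²/3) = exp(-x²/2)
  have hmul : exp (x ^ 2 / 6) * exp (-(2 * x ^ 2) / 3) = exp (-x ^ 2 / 2) := by
    rw [← Real.exp_add]; ring_nf
  have hpos : (0:ℝ) < exp (-(2 * x ^ 2) / 3) := Real.exp_pos _
  have h2 : Real.sqrt (2 * π) * x * exp (-(2 * x ^ 2) / 3) ≤ 3 * exp (-x ^ 2 / 2) := by
    calc Real.sqrt (2 * π) * x * exp (-(2 * x ^ 2) / 3)
        ≤ 3 * exp (x ^ 2 / 6) * exp (-(2 * x ^ 2) / 3) := by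
          apply mul_le_mul_of_nonneg_right key hpos.le
      _ = 3 * exp (-x ^ 2 / 2) := by rw [mul_assoc, hmul]
  unfold gfun
  nlinarith [Real.exp_pos (-x ^ 2 / 2)]

lemma hfun_antitoneOn : AntitoneOn hfun (Ici 0) := by
  apply antitoneOn_of_deriv_nonpos (convex_Ici 0)
  · exact fun x _ => ((hfun_hasDeriv x).differentiableAt).continuousAt.continuousWithinAt
  · exact fun x _ => ((hfun_hasDeriv x).differentiableAt).differentiableWithinAt
  · intro x hx
    exact deriv_nonpos x (le_of_lt (by simpa [interior_Ici] using hx))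

lemma hfun_tendsto : Tendsto hfun atTop (nhds 0) := by
  have h1 : Tendsto Ffun atTop (nhds 0) := by
    have := intervalIntegral_tendsto_integral_Ioi (0:ℝ) gfun_int.integrableOn tendsto_id
    have h2 : Tendsto (fun z => Ffun 0 - ∫ x in (0:ℝ)..z, gfun x) atTop (nhds (Ffun 0 - Ffun 0)) :=
      tendsto_const_nhds.sub this
    rw [sub_self] at h2
    exact h2.congr fun z => (Ffun_eq z).symm
  have h2 : Tendsto (fun z : ℝ => Real.sqrt (2 * π) / 4 * exp (-(2 * z ^ 2) / 3)) atTop (nhds 0) := by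
    rw [show (0:ℝ) = Real.sqrt (2 * π) / 4 * 0 by ring]
    apply Tendsto.const_mul
    apply Real.tendsto_exp_atBot.comp
    have ht : Tendsto (fun z : ℝ => 2 * z ^ 2 / 3) atTop atTop := by
      apply Tendsto.atTop_div_const (by norm_num : (0:ℝ) < 3)
      exact (tendsto_pow_atTop (by norm_num : 2 ≠ 0)).const_mul_atTop (by norm_num : (0:ℝ) < 2)
    exact (tendsto_neg_atTop_atBot.comp ht).congr (fun z => by simp; ring)
  have h3 := h1.sub h2
  rw [sub_zero] at h3
  exact h3

lemma hfun_nonneg (z : ℝ) (hz : 0 ≤ z) : 0 ≤ hfun z := by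
  refine le_of_tendsto hfun_tendsto ?_
  filter_upwards [eventually_ge_atTop z] with y hy
  exact hfun_antitoneOn hz (hz.trans hy) hy

theorem stmt_3 (z : ℝ) (hz : 0 ≤ z) :
    exp (-(2 * z ^ 2) / 3) / 4 ≤
      ((gaussianReal 0 1) (Set.Iic (-z))).toReal := by
  rw [gaussianReal_apply_eq_integral 0 one_ne_zero, ENNReal.toReal_ofReal
    (setIntegral_nonneg measurableSet_Iic fun x _ => gaussianPDFReal_nonneg 0 1 x)]
  have hpdf : ∀ x : ℝ, gaussianPDFReal 0 1 x = (Real.sqrt (2 * π))⁻¹ * gfun x := by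
    intro x
    simp only [gaussianPDFReal, gfun, NNReal.coe_one, mul_one, sub_zero]
    try ring_nf
  have hint : ∫ x in Iic (-z), gaussianPDFReal 0 1 x
      = (Real.sqrt (2 * π))⁻¹ * ∫ x in Iic (-z), gfun x := by
    simp only [hpdf]
    try exact integral_const_mul _ _
  have hsym : ∫ x in Iic (-z), gfun x = Ffun z := by
    have : ∀ x : ℝ, gfun x = gfun (-x) := by intro x; unfold gfun; ring_nf
    calc ∫ x in Iic (-z), gfun x = ∫ x in Iic (-z), gfun (-x) := by
          exact integral_congr_ae (Filter.Eventually.of_forall fun x => this x)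
      _ = ∫ x in Ioi (-(-z)), gfun x := integral_comp_neg_Iic _ _
      _ = Ffun z := by rw [neg_neg]; rfl
  rw [hint, hsym]
  have h0 := hfun_nonneg z hz
  unfold hfun at h0
  have hs : 0 < Real.sqrt (2 * π) := Real.sqrt_pos.mpr (by positivity)
  rw [sub_nonneg] at h0
  calc exp (-(2 * z ^ 2) / 3) / 4
      = (Real.sqrt (2 * π))⁻¹ * (Real.sqrt (2 * π) / 4 * exp (-(2 * z ^ 2) / 3)) := by
        field_simp
    _ ≤ (Real.sqrt (2 * π))⁻¹ * Ffun z := by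
        exact mul_le_mul_of_nonneg_left h0 (by positivity)
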